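/- For the quadratic cost c(x,y) = ½‖x−y‖², the gradient of u ↦ f(φ, u) at a point u ∈ A_σ(φ) equals (1/n)(∑ᵢ PᵢᵀPᵢ u − ∑ᵢ Pᵢᵀ y_{σ(i)}), where σ(i) is the index attaining min_j (½‖Pᵢu − yⱼ‖² − φⱼ). -/

import Mathlib

open Finset

variable {E F : Type*} [NormedAddCommGroup E] [InnerProductSpace ℝ E]
  [NormedAddCommGroup F] [InnerProductSpace ℝ F] [FiniteDimensional ℝ E] [FiniteDimensional ℝ F]

lemma grad_sq (A : E →ₗ[ℝ] F) (b : F) (u : E) :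
    HasGradientAt (fun v => (1/2:ℝ) * ‖A v - b‖^2) ((LinearMap.adjoint A) (A u - b)) u := by
  rw [hasGradientAt_iff_hasFDerivAt]
  have hA : HasFDerivAt (fun v => A v - b) (LinearMap.toContinuousLinearMap A) u :=
    ((LinearMap.toContinuousLinearMap A).hasFDerivAt).sub_const b
  have h := hA.inner ℝ hA
  have h2 := h.const_mul (1/2 : ℝ)
  convert h2 using 2 with v
  · rfl
  · rw [real_inner_self_eq_norm_sq]
  · ext w
    simp [fderivInnerCLM_apply, InnerProductSpace.toDual_apply_apply,
      LinearMap.adjoint_inner_left, real_inner_comm, inner_sub_left, inner_sub_right]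
    ring

/-- For the quadratic cost `c(x,y) = ½‖x−y‖²`, the gradient of `u ↦ f(φ,u)` at a
point `u ∈ A_σ(φ)` (where `σ(i)` is the unique minimizer of
`j ↦ ½‖Pᵢu − yⱼ‖² − φⱼ`) equals `(1/n)(∑ᵢ PᵢᵀPᵢu − ∑ᵢ Pᵢᵀ y_{σ(i)})`. -/
theorem gradient_f_quadratic
    {N n p m : ℕ} [NeZero m]
    (P : Fin n → EuclideanSpace ℝ (Fin N) →ₗ[ℝ] EuclideanSpace ℝ (Fin p))
    (y : Fin m → EuclideanSpace ℝ (Fin p))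
    (φ : Fin m → ℝ) (σ : Fin n → Fin m)
    (u : EuclideanSpace ℝ (Fin N))
    (hu : ∀ i, ∀ k, k ≠ σ i →
      (1/2) * ‖P i u - y (σ i)‖^2 - φ (σ i) < (1/2) * ‖P i u - y k‖^2 - φ k) :
    HasGradientAt
      (fun v : EuclideanSpace ℝ (Fin N) =>
        (1 / n) * (∑ i,
          Finset.univ.inf' Finset.univ_nonempty fun j => (1/2) * ‖P i v - y j‖^2 - φ j)
          + (1 / m) * ∑ j, φ j)
      ((1 / (n : ℝ)) •
        (∑ i, (LinearMap.adjoint (P i)) (P i u) - ∑ i, (LinearMap.adjoint (P i)) (y (σ i))))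
      u := by
  have hcont : ∀ (i : Fin n) (j : Fin m),
      Continuous fun v : EuclideanSpace ℝ (Fin N) => (1/2) * ‖P i v - y j‖^2 - φ j := by
    intro i j
    have := (P i).continuous_of_finiteDimensional
    fun_prop
  -- eventually, σ i is the strict minimizer
  have hev : ∀ᶠ v in nhds u, ∀ i k, k ≠ σ i →
      (1/2) * ‖P i v - y (σ i)‖^2 - φ (σ i) < (1/2) * ‖P i v - y k‖^2 - φ k := by
    rw [Filter.eventually_all]
    intro i
    rw [Filter.eventually_all]
    intro k
    by_cases hk : k = σ i
    · exact Filter.Eventually.of_forall fun v h => absurd hk h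
    · have := ((hcont i (σ i)).continuousAt (x := u)).eventually_lt
        ((hcont i k).continuousAt) (hu i k hk)
      exact this.mono fun v h _ => h
  -- simplified function
  have hsimp : (fun v : EuclideanSpace ℝ (Fin N) =>
        (1 / (n:ℝ)) * (∑ i, ((1/2) * ‖P i v - y (σ i)‖^2 - φ (σ i)))
          + (1 / m) * ∑ j, φ j)
      =ᶠ[nhds u] (fun v : EuclideanSpace ℝ (Fin N) =>
        (1 / n) * (∑ i,
          Finset.univ.inf' Finset.univ_nonempty fun j => (1/2) * ‖P i v - y j‖^2 - φ j)
          + (1 / m) * ∑ j, φ j) := by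
    refine hev.mono fun v hv => ?_
    have : ∀ i : Fin n,
        (Finset.univ.inf' Finset.univ_nonempty fun j => (1/2) * ‖P i v - y j‖^2 - φ j)
          = (1/2) * ‖P i v - y (σ i)‖^2 - φ (σ i) := by
      intro i
      refine le_antisymm (Finset.inf'_le _ (Finset.mem_univ _)) (Finset.le_inf' _ _ ?_)
      intro j _
      by_cases hj : j = σ i
      · subst hj; exact le_rfl
      · exact (hv i j hj).le
    simp_rw [this]
  -- gradients of summands
  have hgi : ∀ i : Fin n, HasGradientAt
      (fun v : EuclideanSpace ℝ (Fin N) => (1/2) * ‖P i v - y (σ i)‖^2 - φ (σ i))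
      ((LinearMap.adjoint (P i)) (P i u - y (σ i))) u := by
    intro i
    have := grad_sq (P i) (y (σ i)) u
    rw [hasGradientAt_iff_hasFDerivAt] at this ⊢
    exact this.sub_const (φ (σ i))
  rw [hasGradientAt_iff_hasFDerivAt]
  refine HasFDerivAt.congr_of_eventuallyEq ?_ hsimp.symm
  have hsum : HasFDerivAt
      (fun v : EuclideanSpace ℝ (Fin N) =>
        ∑ i, ((1/2) * ‖P i v - y (σ i)‖^2 - φ (σ i)))
      (∑ i, (InnerProductSpace.toDual ℝ _ ((LinearMap.adjoint (P i)) (P i u - y (σ i))) :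
        EuclideanSpace ℝ (Fin N) →L[ℝ] ℝ)) u := by
    refine HasFDerivAt.fun_sum fun i _ => ?_
    exact (hasGradientAt_iff_hasFDerivAt.mp (hgi i))
  have h2 := (hsum.const_mul (1 / (n:ℝ))).add_const ((1 / (m:ℝ)) * ∑ j, φ j)
  convert h2 using 1
  · rfl
  · rfl
  ext w
  simp [InnerProductSpace.toDual_apply_apply, inner_sub_left, real_inner_smul_left,
    sum_inner, Finset.mul_sum, map_sub, Finset.sum_sub_distrib, mul_sub]
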